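/- In a strictly convex two-dimensional normed space, if two distinct points p and q lie on two unit circles S(o,1) and S(x,1) with x ≠ o, then o and x lie strictly on opposite sides of the line through p and q. -/

import Mathlib

open Module Metric

section Aux

variable {X : Type*} [NormedAddCommGroup X] [NormedSpace ℝ X]

/-- Strict convexity of the closed unit ball, in combination form. -/
lemma combo_norm_lt [StrictConvexSpace ℝ X] {u w : X} (hu : ‖u‖ ≤ 1) (hw : ‖w‖ ≤ 1)
    (hne : u ≠ w) {a b : ℝ} (ha : 0 < a) (hb : 0 < b) (hab : a + b = 1) :
    ‖a • u + b • w‖ < 1 := by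
  have h := strictConvex_closedBall ℝ (0 : X) 1
    (mem_closedBall_zero_iff.mpr hu) (mem_closedBall_zero_iff.mpr hw) hne ha hb hab
  rw [interior_closedBall _ one_ne_zero] at h
  exact mem_ball_zero_iff.mp h

/-- Three collinear points, middle one of norm one, outer two in the unit ball: impossible. -/
lemma three_collinear_false [StrictConvexSpace ℝ X] {z e : X} {s₁ s₂ s₃ : ℝ}
    (he : e ≠ 0) (h12 : s₁ < s₂) (h23 : s₂ < s₃)
    (h1 : ‖z + s₁ • e‖ ≤ 1) (h2 : ‖z + s₂ • e‖ = 1) (h3 : ‖z + s₃ • e‖ ≤ 1) : False := by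
  have h13 : (0:ℝ) < s₃ - s₁ := by linarith
  have ha : 0 < (s₃ - s₂) / (s₃ - s₁) := div_pos (by linarith) h13
  have hb : 0 < (s₂ - s₁) / (s₃ - s₁) := div_pos (by linarith) h13
  have hab : (s₃ - s₂) / (s₃ - s₁) + (s₂ - s₁) / (s₃ - s₁) = 1 := by
    field_simp
    ring
  have hne : z + s₁ • e ≠ z + s₃ • e := by
    intro h
    have h2' : (s₃ - s₁) • e = (z + s₃ • e) - (z + s₁ • e) := by module
    rw [← h, sub_self] at h2'
    rcases smul_eq_zero.mp h2' with h'' | h''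
    · linarith
    · exact he h''
  have hcomb : ((s₃ - s₂) / (s₃ - s₁)) • (z + s₁ • e) +
      ((s₂ - s₁) / (s₃ - s₁)) • (z + s₃ • e) = z + s₂ • e := by
    have hs3 : s₃ - s₁ ≠ 0 := ne_of_gt h13
    match_scalars
    · field_simp; ring
    · field_simp
      ring
  have := combo_norm_lt h1 h3 hne ha hb hab
  rw [hcomb, h2] at this
  exact lt_irrefl _ this

/-- The contradiction engine: two unit points and two interior points on a line,
with equal separation vector `2 • e`. -/
lemma engine [StrictConvexSpace ℝ X] {e a b P Q : X} (he : e ≠ 0)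
    (ha : ‖a‖ = 1) (hb : ‖b‖ = 1) (hP : ‖P‖ < 1) (hQ : ‖Q‖ < 1)
    (hab : a = b + (2:ℝ) • e) (hPQ : P = Q + (2:ℝ) • e) {c : ℝ}
    (hPa : P = a + c • e) : False := by
  -- points as b + s • e : b ↦ 0, a ↦ 2, Q ↦ c, P ↦ c + 2
  have hb0 : ‖b + (0:ℝ) • e‖ = 1 := by
    rw [zero_smul, add_zero]; exact hb
  have ha2 : ‖b + (2:ℝ) • e‖ = 1 := by rw [← hab]; exact ha
  have hPeq : b + (c + 2) • e = P := by rw [hPa, hab]; module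
  have hPc : ‖b + (c + 2) • e‖ < 1 := by rw [hPeq]; exact hP
  have hQeq : b + c • e = Q := by
    have h1 : Q = P - (2:ℝ) • e := by rw [hPQ]; module
    rw [h1, hPa, hab]; module
  have hQc : ‖b + c • e‖ < 1 := by rw [hQeq]; exact hQ
  rcases lt_trichotomy c 0 with hc | hc | hc
  · exact three_collinear_false he hc (by norm_num : (0:ℝ) < 2) hQc.le hb0 ha2.le
  · rw [hc, zero_add, ha2] at hPc
    exact lt_irrefl _ hPc
  · exact three_collinear_false he (by linarith : (0:ℝ) < 2) (by linarith : (2:ℝ) < c + 2)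
      hb0.le ha2 hPc.le

/-- Main case of the crux lemma. -/
lemma crux_aux [StrictConvexSpace ℝ X] (φ : X →ₗ[ℝ] ℝ) {e m₁ m₂ : X} (he : e ≠ 0)
    (hφe : φ e = 0) (hker : ∀ z : X, φ z = 0 → ∃ c : ℝ, z = c • e)
    (h1p : ‖m₁ + e‖ = 1) (h1m : ‖m₁ - e‖ = 1) (h2p : ‖m₂ + e‖ = 1) (h2m : ‖m₂ - e‖ = 1)
    (hlo : -(φ m₂) < φ m₁) (hhi : φ m₁ < φ m₂) : False := by
  set t₁ := φ m₁ with ht1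
  set t₂ := φ m₂ with ht2
  have ht2pos : 0 < t₂ := by linarith
  have ht2ne : t₂ ≠ 0 := ne_of_gt ht2pos
  set lam : ℝ := (t₂ - t₁) / (2 * t₂) with hlam
  have hl0 : 0 < lam := div_pos (by linarith) (by linarith)
  have hl1 : lam < 1 := by rw [div_lt_one (by linarith)]; linarith
  have hm₂0 : m₂ ≠ 0 := by
    intro h
    rw [h, map_zero] at ht2
    linarith
  have hnegp : ‖-m₂ + e‖ = 1 := by
    rw [show -m₂ + e = -(m₂ - e) by module, norm_neg]; exact h2m
  have hnegm : ‖-m₂ - e‖ = 1 := by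
    rw [show -m₂ - e = -(m₂ + e) by module, norm_neg]; exact h2p
  have hP : ‖(1 - 2*lam) • m₂ + e‖ < 1 := by
    have hcomb : lam • (-m₂ + e) + (1 - lam) • (m₂ + e) = (1 - 2*lam) • m₂ + e := by
      module
    have hne : -m₂ + e ≠ m₂ + e := by
      intro h
      have h2' : (2:ℝ) • m₂ = (m₂ + e) - (-m₂ + e) := by module
      rw [← h, sub_self] at h2'
      rcases smul_eq_zero.mp h2' with h'' | h''
      · norm_num at h''
      · exact hm₂0 h''
    rw [← hcomb]
    exact combo_norm_lt hnegp.le h2p.le hne hl0 (by linarith) (by ring)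
  have hQ : ‖(1 - 2*lam) • m₂ - e‖ < 1 := by
    have hcomb : lam • (-m₂ - e) + (1 - lam) • (m₂ - e) = (1 - 2*lam) • m₂ - e := by
      module
    have hne : -m₂ - e ≠ m₂ - e := by
      intro h
      have h2' : (2:ℝ) • m₂ = (m₂ - e) - (-m₂ - e) := by module
      rw [← h, sub_self] at h2'
      rcases smul_eq_zero.mp h2' with h'' | h''
      · norm_num at h''
      · exact hm₂0 h''
    rw [← hcomb]
    exact combo_norm_lt hnegm.le h2m.le hne hl0 (by linarith) (by ring)
  have hab : m₁ + e = (m₁ - e) + (2:ℝ) • e := by module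
  have hPQ : ((1 - 2*lam) • m₂ + e) = ((1 - 2*lam) • m₂ - e) + (2:ℝ) • e := by module
  have hker0 : φ (((1 - 2*lam) • m₂ + e) - (m₁ + e)) = 0 := by
    have heq : ((1 - 2*lam) • m₂ + e) - (m₁ + e) = (1 - 2*lam) • m₂ - m₁ := by module
    rw [heq, map_sub, map_smul, smul_eq_mul, ← ht1, ← ht2, hlam]
    field_simp
    ring
  obtain ⟨c, hc⟩ := hker _ hker0
  exact engine he h1p h1m hP hQ hab hPQ (by rw [← hc]; module)

/-- A nonzero functional whose kernel is exactly the span of `e`. -/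
lemma exists_functional (hdim : Module.finrank ℝ X = 2) {e : X} (he : e ≠ 0) :
    ∃ φ : X →ₗ[ℝ] ℝ, φ e = 0 ∧ ∀ z : X, φ z = 0 → ∃ c : ℝ, z = c • e := by
  haveI : FiniteDimensional ℝ X := .of_finrank_eq_succ hdim
  have hspan : Submodule.span ℝ {e} ≠ ⊤ := by
    intro h
    have h1 := finrank_span_singleton (K := ℝ) he
    rw [h, finrank_top ℝ X, hdim] at h1
    norm_num at h1
  obtain ⟨u, hu⟩ : ∃ u : X, u ∉ Submodule.span ℝ {e} := by
    by_contra h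
    push_neg at h
    exact hspan (Submodule.eq_top_iff'.mpr h)
  have hli : LinearIndependent ℝ ![e, u] := by
    rw [linearIndependent_fin2]
    refine ⟨?_, ?_⟩
    · simp only [Matrix.cons_val_one, Matrix.head_cons]
      intro h
      exact hu (by simp at h; rw [h]; exact Submodule.zero_mem _)
    · intro a h
      simp only [Matrix.cons_val_one, Matrix.head_cons, Matrix.cons_val_zero] at h
      rcases eq_or_ne a 0 with rfl | ha
      · rw [zero_smul] at h
        exact he h.symm
      · apply hu
        rw [Submodule.mem_span_singleton]
        exact ⟨a⁻¹, by rw [← h, smul_smul, inv_mul_cancel₀ ha, one_smul]⟩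
  have hcard : Fintype.card (Fin 2) = finrank ℝ X := by simp [hdim]
  let b : Basis (Fin 2) ℝ X := basisOfLinearIndependentOfCardEqFinrank hli hcard
  have hb : ⇑b = ![e, u] := coe_basisOfLinearIndependentOfCardEqFinrank hli hcard
  refine ⟨b.coord 1, ?_, ?_⟩
  · have h0 : e = b 0 := by rw [hb]; rfl
    rw [h0, Basis.coord_apply, Basis.repr_self]
    simp
  · intro z hz
    rw [Basis.coord_apply] at hz
    have hrep := b.sum_repr z
    rw [Fin.sum_univ_two, hz, zero_smul, add_zero] at hrep
    have hb0 : b 0 = e := by rw [hb]; rfl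
    rw [hb0] at hrep
    exact ⟨b.repr z 0, hrep.symm⟩

/-- Crux lemma: given `e ≠ 0`, any two points `m` with `‖m + e‖ = ‖m - e‖ = 1`
agree up to sign. -/
lemma crux [StrictConvexSpace ℝ X] (hdim : Module.finrank ℝ X = 2) {e m₁ m₂ : X} (he : e ≠ 0)
    (h1p : ‖m₁ + e‖ = 1) (h1m : ‖m₁ - e‖ = 1) (h2p : ‖m₂ + e‖ = 1) (h2m : ‖m₂ - e‖ = 1) :
    m₁ = m₂ ∨ m₁ = -m₂ := by
  obtain ⟨φ, hφe, hker⟩ := exists_functional hdim he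
  have collin : ∀ w : X, ‖w + e‖ = 1 → ‖w - e‖ = 1 → ∀ r : ℝ,
      ‖(w + r • e) + e‖ = 1 → ‖(w + r • e) - e‖ = 1 → r = 0 := by
    intro w hwp hwm r hrp hrm
    have u1 : ‖w + (1:ℝ) • e‖ = 1 := by rw [one_smul]; exact hwp
    have u2 : ‖w + (-1:ℝ) • e‖ = 1 := by
      rw [neg_smul, one_smul, ← sub_eq_add_neg]; exact hwm
    have u3 : ‖w + (r + 1) • e‖ = 1 := by
      rw [show w + (r + 1) • e = (w + r • e) + e by module]; exact hrp
    have u4 : ‖w + (r - 1) • e‖ = 1 := by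
      rw [show w + (r - 1) • e = (w + r • e) - e by module]; exact hrm
    rcases lt_trichotomy r 0 with hr | hr | hr
    · exact absurd (three_collinear_false he (by linarith : r - 1 < -1)
        (by norm_num : (-1:ℝ) < 1) u4.le u2 u1.le) not_false
    · exact hr
    · exact absurd (three_collinear_false he (by norm_num : (-1:ℝ) < 1)
        (by linarith : (1:ℝ) < r + 1) u2.le u1 u3.le) not_false
  rcases eq_or_ne (φ m₁) (φ m₂) with h | h
  · left
    obtain ⟨r, hr⟩ := hker (m₁ - m₂) (by rw [map_sub, h, sub_self])
    have hm1 : m₁ = m₂ + r • e := by rw [← hr]; module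
    have hr0 : r = 0 := collin m₂ h2p h2m r (hm1 ▸ h1p) (hm1 ▸ h1m)
    rw [hm1, hr0, zero_smul, add_zero]
  rcases eq_or_ne (φ m₁) (-(φ m₂)) with h' | h'
  · right
    obtain ⟨r, hr⟩ := hker (m₁ + m₂) (by rw [map_add]; linarith)
    have hm1 : m₁ = -m₂ + r • e := by rw [← hr]; module
    have hnp : ‖-m₂ + e‖ = 1 := by
      rw [show -m₂ + e = -(m₂ - e) by module, norm_neg]; exact h2m
    have hnm : ‖-m₂ - e‖ = 1 := by
      rw [show -m₂ - e = -(m₂ + e) by module, norm_neg]; exact h2p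
    have hr0 : r = 0 := collin (-m₂) hnp hnm r (hm1 ▸ h1p) (hm1 ▸ h1m)
    rw [hm1, hr0, zero_smul, add_zero]
  · exfalso
    have habs : |φ m₁| ≠ |φ m₂| := by
      intro hh
      rcases abs_eq_abs.mp hh with h'' | h''
      · exact h h''
      · exact h' h''
    have hnegs : ∀ m : X, ‖m + e‖ = 1 → ‖m - e‖ = 1 → ‖-m + e‖ = 1 ∧ ‖-m - e‖ = 1 := by
      intro m hmp hmm
      constructor
      · rw [show -m + e = -(m - e) by module, norm_neg]; exact hmm
      · rw [show -m - e = -(m + e) by module, norm_neg]; exact hmp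
    rcases lt_or_gt_of_ne habs with hlt | hlt
    · rcases le_or_gt 0 (φ m₂) with hs | hs
      · rw [abs_of_nonneg hs] at hlt
        obtain ⟨hl, hh⟩ := abs_lt.mp hlt
        exact crux_aux φ he hφe hker h1p h1m h2p h2m hl hh
      · obtain ⟨hnp2, hnm2⟩ := hnegs m₂ h2p h2m
        rw [abs_of_neg hs] at hlt
        obtain ⟨hl, hh⟩ := abs_lt.mp hlt
        exact crux_aux φ he hφe hker h1p h1m hnp2 hnm2
          (by rw [map_neg]; linarith) (by rw [map_neg]; linarith)
    · rcases le_or_gt 0 (φ m₁) with hs | hs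
      · rw [abs_of_nonneg hs] at hlt
        obtain ⟨hl, hh⟩ := abs_lt.mp hlt
        exact crux_aux φ he hφe hker h2p h2m h1p h1m hl hh
      · obtain ⟨hnp1, hnm1⟩ := hnegs m₁ h1p h1m
        rw [abs_of_neg hs] at hlt
        obtain ⟨hl, hh⟩ := abs_lt.mp hlt
        exact crux_aux φ he hφe hker h2p h2m hnp1 hnm1
          (by rw [map_neg]; linarith) (by rw [map_neg]; linarith)

end Aux

/-- In a strictly convex two-dimensional normed space, if distinct points `p, q`
lie on the unit circles centered at `0` and at `x ≠ 0`, then `0` and `x` are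
strictly on opposite sides of the line through `p` and `q`: every nonzero
affine functional vanishing at `p` and `q` takes values of opposite sign at
`0` and `x`. -/
theorem centers_opposite_sides {X : Type*} [NormedAddCommGroup X]
    [NormedSpace ℝ X] [StrictConvexSpace ℝ X] (hdim : Module.finrank ℝ X = 2)
    (p q x : X) (hpq : p ≠ q) (hp : ‖p‖ = 1) (hq : ‖q‖ = 1)
    (hpx : ‖p - x‖ = 1) (hqx : ‖q - x‖ = 1) (hx : x ≠ 0) :
    ∀ f : X →ᵃ[ℝ] ℝ, f ≠ 0 → f p = 0 → f q = 0 → f 0 * f x < 0 := by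
  intro f hf hfp hfq
  have hpq0 : p - q ≠ 0 := sub_ne_zero.mpr hpq
  have he : (2:ℝ)⁻¹ • (p - q) ≠ 0 := smul_ne_zero (by norm_num) hpq0
  have h1p : ‖(2:ℝ)⁻¹ • (p + q) + (2:ℝ)⁻¹ • (p - q)‖ = 1 := by
    rw [show (2:ℝ)⁻¹ • (p + q) + (2:ℝ)⁻¹ • (p - q) = p by module]; exact hp
  have h1m : ‖(2:ℝ)⁻¹ • (p + q) - (2:ℝ)⁻¹ • (p - q)‖ = 1 := by
    rw [show (2:ℝ)⁻¹ • (p + q) - (2:ℝ)⁻¹ • (p - q) = q by module]; exact hq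
  have h2p : ‖((2:ℝ)⁻¹ • (p + q) - x) + (2:ℝ)⁻¹ • (p - q)‖ = 1 := by
    rw [show ((2:ℝ)⁻¹ • (p + q) - x) + (2:ℝ)⁻¹ • (p - q) = p - x by module]; exact hpx
  have h2m : ‖((2:ℝ)⁻¹ • (p + q) - x) - (2:ℝ)⁻¹ • (p - q)‖ = 1 := by
    rw [show ((2:ℝ)⁻¹ • (p + q) - x) - (2:ℝ)⁻¹ • (p - q) = q - x by module]; exact hqx
  have hx_eq : x = p + q := by
    rcases crux hdim he h1p h1m h2p h2m with h | h
    · exfalso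
      apply hx
      have h1 : x = (2:ℝ)⁻¹ • (p + q) - ((2:ℝ)⁻¹ • (p + q) - x) := by module
      rw [← h, sub_self] at h1
      exact h1
    · have h1 : (p + q) - x =
          (2:ℝ)⁻¹ • (p + q) - (-((2:ℝ)⁻¹ • (p + q) - x)) := by module
      rw [← h, sub_self] at h1
      exact (sub_eq_zero.mp h1).symm
  have key : ∀ y : X, f y = f.linear y + f 0 := by
    intro y
    have h := f.map_vadd 0 y
    simpa [add_comm] using h
  have hlinp : f.linear p = -(f 0) := by
    have h := key p
    rw [hfp] at h
    linarith
  have hlinq : f.linear q = -(f 0) := by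
    have h := key q
    rw [hfq] at h
    linarith
  have hfx : f x = -(f 0) := by
    rw [key x, hx_eq, map_add, hlinp, hlinq]
    ring
  have hf0 : f 0 ≠ 0 := by
    intro h0
    apply hf
    have hp0 : f.linear p = 0 := by rw [hlinp, h0, neg_zero]
    have hq0 : f.linear q = 0 := by rw [hlinq, h0, neg_zero]
    have hqne : q ≠ 0 := by
      intro h
      rw [h, norm_zero] at hq
      norm_num at hq
    have hli : LinearIndependent ℝ ![p, q] := by
      rw [linearIndependent_fin2]
      refine ⟨by simpa using hqne, ?_⟩
      intro a ha
      simp only [Matrix.cons_val_one, Matrix.head_cons, Matrix.cons_val_zero] at ha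
      have habs : |a| = 1 := by
        have h1 : ‖a • q‖ = 1 := by rw [ha]; exact hp
        rwa [norm_smul, hq, mul_one, Real.norm_eq_abs] at h1
      rcases (abs_eq (by norm_num : (0:ℝ) ≤ 1)).mp habs with h1 | h1
      · rw [h1, one_smul] at ha
        exact hpq ha.symm
      · rw [h1, neg_smul, one_smul] at ha
        apply hx
        rw [hx_eq, ← ha]
        module
    haveI : FiniteDimensional ℝ X := .of_finrank_eq_succ hdim
    have hspan : Submodule.span ℝ (Set.range ![p, q]) = ⊤ :=
      hli.span_eq_top_of_card_eq_finrank (by simp [hdim])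
    have hlin0 : f.linear = 0 := by
      apply LinearMap.ext_on hspan
      intro y hy
      rcases Set.mem_range.mp hy with ⟨i, rfl⟩
      fin_cases i
      · simpa using hp0
      · simpa using hq0
    ext y
    rw [key y, hlin0, h0]
    simp
  rw [hfx]
  have hpos : 0 < f 0 * f 0 := mul_self_pos.mpr hf0
  nlinarith
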